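/- arXiv:math/0001165 — 2 statements merged into one kernel-verified Lean document; each statement's English description precedes it below -/
import Mathlib

section
/- Let V be a weighted digraph with φ_{k-1} - φ_k > φ_k - φ_{k+1}, and let i be a root of some minimal-weight spanning k-forest. Then there exists a minimal-weight spanning k-forest F in which i is a root and the vertex set of the tree of F rooted at i equals the k-attraction domain of i, i.e., the set of all vertices j such that i is accessible from j in at least one minimal-weight spanning k-forest. Moreover, mutually k-attainable marked vertices have equal k-attraction domains. -/
open Relation

/-- The arc relation of a functional digraph: `F i = some j` means there is an arc `i → j`. -/
def Arc {V : Type*} (F : V → Option V) (i j : V) : Prop := F i = some j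

/-- A directed forest: a functional digraph (out-degree ≤ 1) without directed circuits. -/
def IsForest {V : Type*} (F : V → Option V) : Prop :=
  ∀ i, ¬ Relation.TransGen (Arc F) i i

/-- `j` is accessible from `i` by a directed walk. -/
def Reaches {V : Type*} (F : V → Option V) (i j : V) : Prop :=
  Relation.ReflTransGen (Arc F) i j

open Classical in
/-- The `D`-exchange of `F` by `G`: replace the outgoing arcs (in `F`) of vertices of `D`
by their outgoing arcs in `G`. -/
noncomputable def exchange {V : Type*} (D : Set V) (F G : V → Option V) : V → Option V :=
  fun i => if i ∈ D then G i else F i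

/-- The set of vertices of the tree of the forest `F` with root `r`. -/
def treeSet {V : Type*} (F : V → Option V) (r : V) : Set V := {i | Reaches F i r}

section Weighted

variable {V : Type*} [Fintype V] [DecidableEq V]

/-- A spanning forest of the digraph with arc relation `A`. -/
def IsSpanningForest (A : V → V → Prop) (F : V → Option V) : Prop :=
  IsForest F ∧ ∀ i j, F i = some j → A i j

/-- The number of trees (= roots) of a forest. -/
def numTrees (F : V → Option V) : ℕ :=
  (Finset.univ.filter (fun i => F i = none)).card

/-- The weight of a forest: the sum of the weights of its arcs. -/
noncomputable def weight (w : V → V → ℝ) (F : V → Option V) : ℝ :=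
  ∑ i, (F i).elim 0 (w i)

/-- `F` is a minimal-weight (extreme) spanning forest with `k` trees. -/
def ExtremeForest (A : V → V → Prop) (w : V → V → ℝ) (k : ℕ) (F : V → Option V) : Prop :=
  IsSpanningForest A F ∧ numTrees F = k ∧
    ∀ G, IsSpanningForest A G → numTrees G = k → weight w F ≤ weight w G

/-- `φ_k`: the minimum weight of a spanning forest with exactly `k` trees. -/
noncomputable def phi (A : V → V → Prop) (w : V → V → ℝ) (k : ℕ) : ℝ :=
  sInf (weight w '' {F | IsSpanningForest A F ∧ numTrees F = k})

end Weighted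

section Algebras

variable {V : Type*} [Fintype V] [DecidableEq V]

/-- The generating family of `A_k`: vertex sets of trees of minimal-weight spanning
`k`-forests. -/
def genSets (A : V → V → Prop) (w : V → V → ℝ) (k : ℕ) : Set (Set V) :=
  {S | ∃ F r, ExtremeForest A w k F ∧ F r = none ∧ S = treeSet F r}

/-- The algebra `A_k` of subsets of the vertex set generated by the vertex sets of trees of
minimal-weight spanning `k`-forests. -/
noncomputable def alg (A : V → V → Prop) (w : V → V → ℝ) (k : ℕ) : MeasurableSpace V :=
  MeasurableSpace.generateFrom (genSets A w k)

/-- `E` is an elementary set (atom) of the algebra `m`. -/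
def IsElementary (m : MeasurableSpace V) (E : Set V) : Prop :=
  @MeasurableSet V m E ∧ E.Nonempty ∧ ∀ S, @MeasurableSet V m S → S ⊆ E → S = ∅ ∨ S = E

/-- `i` is a marked vertex of level `k`: a root of some minimal-weight spanning `k`-forest. -/
def IsMarked (A : V → V → Prop) (w : V → V → ℝ) (k : ℕ) (i : V) : Prop :=
  ∃ F, ExtremeForest A w k F ∧ F i = none

end Algebras

/-- The `k`-attraction domain of a vertex `i`: all vertices from which `i` is attainable in
some minimal-weight spanning `k`-forest. -/
def attrDomain {V : Type*} [Fintype V] [DecidableEq V]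
    (A : V → V → Prop) (w : V → V → ℝ) (k : ℕ) (i : V) : Set V :=
  {j | ∃ F, ExtremeForest A w k F ∧ Reaches F j i}

section AuxProof

open Finset in
theorem aux_dummy : True := trivial

namespace ADRProof

set_option linter.unusedSectionVars false

variable {V : Type*} [Fintype V] [DecidableEq V]

theorem arc_det {F : V → Option V} {a b c : V} (h1 : Arc F a b) (h2 : Arc F a c) : b = c := by
  have h1' : F a = some b := h1
  have h2' : F a = some c := h2
  rw [h1'] at h2'; exact Option.some_inj.mp h2'

/-- If `v` reaches a root, `v` is not on a cycle. -/
theorem no_cycle_of_reach_none {K : V → Option V} {v ρ : V}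
    (hr : Reaches K v ρ) (hρ : K ρ = none) : ¬ Relation.TransGen (Arc K) v v := by
  have hr' : Relation.ReflTransGen (Arc K) v ρ := hr
  clear hr
  induction hr' using Relation.ReflTransGen.head_induction_on with
  | refl =>
    intro hc
    obtain ⟨u, hu, -⟩ := Relation.TransGen.head'_iff.mp hc
    have : K ρ = some u := hu
    rw [hρ] at this; cases this
  | head h' h ih =>
    intro hc
    obtain ⟨u, hu, hrest⟩ := Relation.TransGen.head'_iff.mp hc
    have := arc_det hu h'
    subst this
    exact ih (Relation.TransGen.tail' hrest h')


/-- Generic acyclicity lemma: if outside `S` the arcs agree with a forest `F`, and every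
vertex of `S` reaches a root of `K`, then `K` is a forest. -/
theorem noCycle {K F : V → Option V} (S : Set V) (hF : IsForest F)
    (houts : ∀ v, v ∉ S → K v = F v)
    (hterm : ∀ v ∈ S, ∃ ρ, Reaches K v ρ ∧ K ρ = none) : IsForest K := by
  intro v hc
  by_cases hS : ∃ u ∈ S, Reaches K v u
  · obtain ⟨u, hu, hvu⟩ := hS
    obtain ⟨ρ, hρ1, hρ2⟩ := hterm u hu
    exact no_cycle_of_reach_none (Relation.ReflTransGen.trans hvu hρ1) hρ2 hc
  · push_neg at hS
    have key : ∀ a b, Relation.TransGen (Arc K) a b →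
        (∀ u ∈ S, ¬ Reaches K a u) → Relation.TransGen (Arc F) a b := by
      intro a b h
      induction h with
      | single h' =>
        intro ha
        have haS : a ∉ S := fun hmem => ha a hmem Relation.ReflTransGen.refl
        exact Relation.TransGen.single (show F _ = some _ by rw [← houts a haS]; exact h')
      | tail h h' ih =>
        intro ha
        rename_i b' c'
        have hb' : b' ∉ S := fun hmem => ha b' hmem h.to_reflTransGen
        exact Relation.TransGen.tail (ih ha)
          (show F _ = some _ by rw [← houts b' hb']; exact h')
    exact hF v (key v v hc hS)

theorem exchange_mem {D : Set V} {F G : V → Option V} {v : V} (h : v ∈ D) :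
    exchange D F G v = G v := by
  simp only [exchange]; exact if_pos h

theorem exchange_not_mem {D : Set V} {F G : V → Option V} {v : V} (h : v ∉ D) :
    exchange D F G v = F v := by
  simp only [exchange]; exact if_neg h

theorem reaches_none_eq {G : V → Option V} {v ρ : V} (h : Reaches G v ρ) (hv : G v = none) :
    v = ρ := by
  have h' : Relation.ReflTransGen (Arc G) v ρ := h
  rcases h'.cases_head with rfl | ⟨c, hc, -⟩
  · rfl
  · have : G v = some c := hc
    rw [hv] at this; cases this

theorem reaches_roots_eq {G : V → Option V} {r ρ1 ρ2 : V} (h1 : G ρ1 = none)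
    (h2 : G ρ2 = none) (hv1 : Reaches G r ρ1) : Reaches G r ρ2 → ρ1 = ρ2 := by
  have hv1' : Relation.ReflTransGen (Arc G) r ρ1 := hv1
  clear hv1
  induction hv1' using Relation.ReflTransGen.head_induction_on with
  | refl => intro hv2; exact reaches_none_eq hv2 h1
  | head harc hrest ih =>
    intro hv2
    rcases (show Relation.ReflTransGen (Arc G) _ ρ2 from hv2).cases_head with rfl | ⟨c', harc', hrest'⟩
    · have : G _ = some _ := harc
      rw [h2] at this; cases this
    · have := arc_det harc' harc
      subst this
      exact ih hrest'

/-- Every vertex of a forest reaches a root. -/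
theorem exists_term {K : V → Option V} (hK : IsForest K) (v : V) :
    ∃ ρ, Reaches K v ρ ∧ K ρ = none := by
  have main : ∀ n v, Set.ncard {u | Reaches K v u} ≤ n → ∃ ρ, Reaches K v ρ ∧ K ρ = none := by
    intro n
    induction n with
    | zero =>
      intro v hv
      exfalso
      have hvmem : v ∈ {u | Reaches K v u} := Relation.ReflTransGen.refl
      have : 0 < Set.ncard {u | Reaches K v u} :=
        (Set.ncard_pos (Set.toFinite _)).mpr ⟨v, hvmem⟩
      omega
    | succ n ih =>
      intro v hv
      cases h : K v with
      | none => exact ⟨v, Relation.ReflTransGen.refl, h⟩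
      | some u =>
        have harc : Arc K v u := h
        have hsub : {x | Reaches K u x} ⊂ {x | Reaches K v x} := by
          constructor
          · intro x hx
            exact Relation.ReflTransGen.head harc hx
          · intro hcon
            have hvv : v ∈ {x | Reaches K u x} := hcon Relation.ReflTransGen.refl
            exact hK v (Relation.TransGen.head' harc hvv)
        have hlt : Set.ncard {x | Reaches K u x} < Set.ncard {x | Reaches K v x} :=
          Set.ncard_lt_ncard hsub (Set.toFinite _)
        obtain ⟨ρ, hρ1, hρ2⟩ := ih u (by omega)
        exact ⟨ρ, Relation.ReflTransGen.head harc hρ1, hρ2⟩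
  exact main _ v le_rfl

end ADRProof
end AuxProof

namespace ADRProof

variable {V : Type*} [Fintype V] [DecidableEq V]

set_option linter.unusedSectionVars false

/-- Reaching the root `ρ` inside the tree-exchange region. -/
theorem reach_tree_exchange {F G : V → Option V} {ρ : V} :
    ∀ v, Reaches G v ρ → Reaches (exchange (treeSet G ρ) F G) v ρ := by
  intro v hv
  have hv' : Relation.ReflTransGen (Arc G) v ρ := hv
  clear hv
  induction hv' using Relation.ReflTransGen.head_induction_on with
  | refl => exact Relation.ReflTransGen.refl
  | head harc hrest ih =>
    rename_i a c
    have haW : a ∈ treeSet G ρ := Relation.ReflTransGen.head harc hrest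
    have : Arc (exchange (treeSet G ρ) F G) a c := by
      show exchange (treeSet G ρ) F G a = some c
      rw [exchange_mem haW]; exact harc
    exact Relation.ReflTransGen.head this ih

/-- Reaching `i` inside the rooted-tree-exchange region. -/
theorem reach_root_exchange {F G : V → Option V} {i : V} :
    ∀ v, Reaches G v i → Reaches (exchange (treeSet G i \ {i}) F G) v i := by
  intro v hv
  have hv' : Relation.ReflTransGen (Arc G) v i := hv
  clear hv
  induction hv' using Relation.ReflTransGen.head_induction_on with
  | refl => exact Relation.ReflTransGen.refl
  | head harc hrest ih =>
    rename_i a c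
    by_cases ha : a = i
    · subst ha; exact Relation.ReflTransGen.refl
    · have haD : a ∈ treeSet G i \ {i} :=
        ⟨Relation.ReflTransGen.head harc hrest, ha⟩
      have : Arc (exchange (treeSet G i \ {i}) F G) a c := by
        show exchange (treeSet G i \ {i}) F G a = some c
        rw [exchange_mem haD]; exact harc
      exact Relation.ReflTransGen.head this ih

/-- Lifting an `F`-path to the exchange, version where the target is outside `D`. -/
theorem reach_lift {D : Set V} {F G : V → Option V} {t : V}
    (hD : ∀ v ∈ D, Reaches (exchange D F G) v t) :
    ∀ y, Reaches F y t → Reaches (exchange D F G) y t := by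
  intro y hy
  have hy' : Relation.ReflTransGen (Arc F) y t := hy
  clear hy
  induction hy' using Relation.ReflTransGen.head_induction_on with
  | refl => exact Relation.ReflTransGen.refl
  | head harc hrest ih =>
    rename_i a c
    by_cases ha : a ∈ D
    · exact hD a ha
    · have : Arc (exchange D F G) a c := by
        show exchange D F G a = some c
        rw [exchange_not_mem ha]; exact harc
      exact Relation.ReflTransGen.head this ih

/-- Lifting an `F`-path to a vertex `z ∈ D`, continuing to `t`. -/
theorem reach_lift' {D : Set V} {F G : V → Option V} {t z : V}
    (hD : ∀ v ∈ D, Reaches (exchange D F G) v t) (hz : z ∈ D) :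
    ∀ y, Reaches F y z → Reaches (exchange D F G) y t := by
  intro y hy
  have hy' : Relation.ReflTransGen (Arc F) y z := hy
  clear hy
  induction hy' using Relation.ReflTransGen.head_induction_on with
  | refl => exact hD z hz
  | head harc hrest ih =>
    rename_i a c
    by_cases ha : a ∈ D
    · exact hD a ha
    · have : Arc (exchange D F G) a c := by
        show exchange D F G a = some c
        rw [exchange_not_mem ha]; exact harc
      exact Relation.ReflTransGen.head this ih

/-- The complementary exchange of a `G`-predecessor-closed set is a forest. -/
theorem compl_exchange_forest {D : Set V} {F G : V → Option V}
    (hF : IsForest F) (hG : IsForest G)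
    (hpred : ∀ u x, G u = some x → x ∈ D → u ∈ D) :
    IsForest (exchange Dᶜ F G) := by
  apply noCycle (K := exchange Dᶜ F G) Dᶜ hF
  · intro v hv
    have hv' : v ∈ D := by simpa using hv
    rw [exchange_not_mem (by simpa using hv' : v ∉ Dᶜ)]
  · intro v hv
    have hvD : v ∉ D := hv
    obtain ⟨ρ, hρ1, hρ2⟩ := exists_term hG v
    have key : ∀ a, Relation.ReflTransGen (Arc G) a ρ → a ∉ D →
        Reaches (exchange Dᶜ F G) a ρ := by
      intro a ha
      induction ha using Relation.ReflTransGen.head_induction_on with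
      | refl => intro _; exact Relation.ReflTransGen.refl
      | head harc hrest ih =>
        rename_i a' c
        intro ha'
        have hc : c ∉ D := fun hcD => ha' (hpred a' c harc hcD)
        have : Arc (exchange Dᶜ F G) a' c := by
          show exchange Dᶜ F G a' = some c
          rw [exchange_mem (by simpa using ha' : a' ∈ Dᶜ)]; exact harc
        exact Relation.ReflTransGen.head this (ih hc)
    have hρD : ρ ∉ D := by
      intro hρD
      -- then v ∈ D by pred-closure along the path
      have : ∀ a, Relation.ReflTransGen (Arc G) a ρ → a ∈ D := by
        intro a ha
        induction ha using Relation.ReflTransGen.head_induction_on with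
        | refl => exact hρD
        | head harc hrest ih =>
          rename_i a' c
          exact hpred a' c harc ih
      exact hvD (this v hρ1)
    refine ⟨ρ, key v hρ1 hvD, ?_⟩
    rw [exchange_mem (by simpa using hρD : ρ ∈ Dᶜ)]
    exact hρ2

theorem exchange_arcs {A : V → V → Prop} {D : Set V} {F G : V → Option V}
    (hF : ∀ i j, F i = some j → A i j) (hG : ∀ i j, G i = some j → A i j) :
    ∀ i j, exchange D F G i = some j → A i j := by
  intro a b h
  by_cases ha : a ∈ D
  · rw [exchange_mem ha] at h; exact hG a b h
  · rw [exchange_not_mem ha] at h; exact hF a b h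

end ADRProof

namespace ADRProof

variable {V : Type*} [Fintype V] [DecidableEq V]

set_option linter.unusedSectionVars false

open Classical in
/-- The number of roots of `F` lying in `D`. -/
noncomputable def rootsIn (D : Set V) (F : V → Option V) : ℕ :=
  (Finset.univ.filter (fun v => v ∈ D ∧ F v = none)).card

open Classical in
theorem numTrees_eq_sum (F : V → Option V) :
    numTrees F = ∑ v : V, if F v = none then 1 else 0 := by
  rw [numTrees, Finset.card_filter]

open Classical in
theorem rootsIn_eq_sum (D : Set V) (F : V → Option V) :
    rootsIn D F = ∑ v : V, if v ∈ D ∧ F v = none then 1 else 0 := by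
  rw [rootsIn, Finset.card_filter]

theorem rootsIn_split (D : Set V) (F : V → Option V) :
    rootsIn D F + rootsIn Dᶜ F = numTrees F := by
  classical
  rw [rootsIn_eq_sum, rootsIn_eq_sum, numTrees_eq_sum, ← Finset.sum_add_distrib]
  refine Finset.sum_congr rfl fun v _ => ?_
  by_cases hv : v ∈ D <;> by_cases hr : F v = none <;> simp [hv, hr]

theorem numTrees_exchange (D : Set V) (F G : V → Option V) :
    numTrees (exchange D F G) = rootsIn D G + rootsIn Dᶜ F := by
  classical
  rw [rootsIn_eq_sum, rootsIn_eq_sum, numTrees_eq_sum, ← Finset.sum_add_distrib]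
  refine Finset.sum_congr rfl fun v _ => ?_
  by_cases hv : v ∈ D
  · rw [exchange_mem hv]
    by_cases hr : G v = none <;> simp [hv, hr]
  · rw [exchange_not_mem hv]
    by_cases hr : F v = none <;> simp [hv, hr]

theorem numTrees_exchange_add (D : Set V) (F G : V → Option V) :
    numTrees (exchange D F G) + numTrees (exchange Dᶜ F G) = numTrees F + numTrees G := by
  rw [numTrees_exchange, numTrees_exchange, compl_compl]
  have h1 := rootsIn_split D G
  have h2 := rootsIn_split D F
  omega

theorem weight_exchange_add (w : V → V → ℝ) (D : Set V) (F G : V → Option V) :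
    weight w (exchange D F G) + weight w (exchange Dᶜ F G) = weight w F + weight w G := by
  rw [weight, weight, weight, weight, ← Finset.sum_add_distrib, ← Finset.sum_add_distrib]
  refine Finset.sum_congr rfl fun v _ => ?_
  by_cases hv : v ∈ D
  · rw [exchange_mem hv, exchange_not_mem (by simpa using hv : v ∉ Dᶜ)]
    ring
  · rw [exchange_not_mem hv, exchange_mem (by simpa using hv : v ∈ Dᶜ)]

theorem rootsIn_eq_zero {D : Set V} {F : V → Option V}
    (h : ∀ v ∈ D, F v ≠ none) : rootsIn D F = 0 := by
  classical
  rw [rootsIn, Finset.card_eq_zero, Finset.filter_eq_empty_iff]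
  intro v _
  rintro ⟨hv, hr⟩
  exact h v hv hr

theorem rootsIn_eq_one {D : Set V} {F : V → Option V} {r : V}
    (hr : r ∈ D ∧ F r = none) (huniq : ∀ v, v ∈ D → F v = none → v = r) :
    rootsIn D F = 1 := by
  classical
  rw [rootsIn]
  rw [show (Finset.univ.filter (fun v => v ∈ D ∧ F v = none)) = {r} from ?_]
  · exact Finset.card_singleton r
  · ext v
    simp only [Finset.mem_filter, Finset.mem_univ, true_and, Finset.mem_singleton]
    constructor
    · rintro ⟨h1, h2⟩; exact huniq v h1 h2
    · rintro rfl; exact hr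

open Classical in
theorem exists_of_rootsIn_eq_one {D : Set V} {F : V → Option V}
    (h : rootsIn D F = 1) :
    ∃ r, (r ∈ D ∧ F r = none) ∧ ∀ v, v ∈ D → F v = none → v = r := by
  rw [rootsIn] at h
  obtain ⟨r, hr⟩ := Finset.card_eq_one.mp h
  have hrmem : r ∈ Finset.univ.filter (fun v => v ∈ D ∧ F v = none) := by
    rw [hr]; exact Finset.mem_singleton_self r
  simp only [Finset.mem_filter, Finset.mem_univ, true_and] at hrmem
  refine ⟨r, hrmem, ?_⟩
  intro v h1 h2
  have : v ∈ Finset.univ.filter (fun x => x ∈ D ∧ F x = none) := by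
    simp only [Finset.mem_filter, Finset.mem_univ, true_and]
    exact ⟨h1, h2⟩
  rw [hr] at this
  exact Finset.mem_singleton.mp this

theorem rootsIn_univ_of_subset {D : Set V} {F : V → Option V}
    (h : ∀ v, F v = none → v ∈ D) : rootsIn D F = numTrees F := by
  classical
  rw [rootsIn, numTrees]
  congr 1
  apply Finset.filter_congr
  intro v _
  constructor
  · rintro ⟨-, h2⟩; exact h2
  · intro h2; exact ⟨h v h2, h2⟩

end ADRProof

namespace ADRProof

variable {V : Type*} [Fintype V] [DecidableEq V]
variable {A : V → V → Prop} {w : V → V → ℝ}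

set_option linter.unusedSectionVars false

theorem phi_le {t : ℕ} {F : V → Option V} (hF : IsSpanningForest A F)
    (ht : numTrees F = t) : phi A w t ≤ weight w F := by
  apply csInf_le
  · exact Set.Finite.bddBelow (Set.Finite.image _ (Set.toFinite _))
  · exact ⟨F, ⟨hF, ht⟩, rfl⟩

theorem phi_attained {t : ℕ} (h : ∃ F, IsSpanningForest A F ∧ numTrees F = t) :
    ∃ F, IsSpanningForest A F ∧ numTrees F = t ∧ weight w F = phi A w t := by
  obtain ⟨F0, hF0⟩ := h
  have hne : (weight w '' {F | IsSpanningForest A F ∧ numTrees F = t}).Nonempty :=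
    ⟨weight w F0, F0, hF0, rfl⟩
  have hmem := hne.csInf_mem (Set.Finite.image _ (Set.toFinite _))
  obtain ⟨F, hF, hw⟩ := hmem
  exact ⟨F, hF.1, hF.2, hw⟩

theorem extreme_iff {k : ℕ} {F : V → Option V} :
    ExtremeForest A w k F ↔
      IsSpanningForest A F ∧ numTrees F = k ∧ weight w F = phi A w k := by
  constructor
  · rintro ⟨h1, h2, h3⟩
    refine ⟨h1, h2, le_antisymm ?_ (phi_le h1 h2)⟩
    obtain ⟨F0, hF01, hF02, hF03⟩ := phi_attained (A := A) (w := w) ⟨F, h1, h2⟩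
    calc weight w F ≤ weight w F0 := h3 F0 hF01 hF02
      _ = phi A w k := hF03
  · rintro ⟨h1, h2, h3⟩
    exact ⟨h1, h2, fun G hG hGk => h3 ▸ phi_le hG hGk⟩

/-- The two complementary exchanges along the full tree of a root `ρ` of `G`. -/
theorem tree_exchange {F G : V → Option V} {ρ : V}
    (hFf : IsForest F) (hGf : IsForest G) (hρ : G ρ = none) :
    IsForest (exchange (treeSet G ρ) F G) ∧
    IsForest (exchange (treeSet G ρ)ᶜ F G) ∧
    numTrees (exchange (treeSet G ρ)ᶜ F G) + 1 =
      numTrees G + rootsIn (treeSet G ρ) F ∧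
    numTrees (exchange (treeSet G ρ) F G) = rootsIn (treeSet G ρ)ᶜ F + 1 := by
  set W := treeSet G ρ with hW
  have hρW : ρ ∈ W := Relation.ReflTransGen.refl
  have hpred : ∀ u x, G u = some x → x ∈ W → u ∈ W := by
    intro u x harc hx
    exact Relation.ReflTransGen.head harc hx
  have h1 : IsForest (exchange W F G) := by
    apply noCycle (K := exchange W F G) W hFf
    · intro v hv; exact exchange_not_mem hv
    · intro v hv
      refine ⟨ρ, reach_tree_exchange v hv, ?_⟩
      rw [exchange_mem hρW]; exact hρ
  have h2 : IsForest (exchange Wᶜ F G) := compl_exchange_forest hFf hGf hpred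
  have hGroots : rootsIn W G = 1 := by
    apply rootsIn_eq_one ⟨hρW, hρ⟩
    intro v hv hvnone
    exact reaches_none_eq hv hvnone
  have hcount : numTrees (exchange Wᶜ F G) + 1 = numTrees G + rootsIn W F := by
    rw [numTrees_exchange, compl_compl]
    have := rootsIn_split W G
    omega
  refine ⟨h1, h2, hcount, ?_⟩
  rw [numTrees_exchange]
  omega

/-- Weak convexity step with a pigeonhole for the smaller forest. -/
theorem wlem {k : ℕ} (A : V → V → Prop) (w : V → V → ℝ) {p q' : ℕ} (h : p + 1 ≤ q')
    (hp : ∃ F, IsSpanningForest A F ∧ numTrees F = p)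
    (hq : ∃ F, IsSpanningForest A F ∧ numTrees F = q' + 1) :
    (∃ F, IsSpanningForest A F ∧ numTrees F = p + 1) ∧
    (∃ F, IsSpanningForest A F ∧ numTrees F = q') ∧
    phi A w (p + 1) + phi A w q' ≤ phi A w p + phi A w (q' + 1) := by
  classical
  obtain ⟨F, hFs, hFt, hFw⟩ := phi_attained (w := w) hp
  obtain ⟨G, hGs, hGt, hGw⟩ := phi_attained (w := w) hq
  -- pigeonhole: some tree of G contains no root of F
  have pig : ∃ ρ, G ρ = none ∧ ∀ r, F r = none → ¬ Reaches G r ρ := by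
    by_contra hcon
    push_neg at hcon
    -- hcon : ∀ ρ, G ρ = none → ∃ r, F r = none ∧ Reaches G r ρ
    set f : V → V := fun ρ => if hρ : G ρ = none then (hcon ρ hρ).choose else ρ with hf
    have hmap : ∀ ρ ∈ Finset.univ.filter (fun v => G v = none),
        f ρ ∈ Finset.univ.filter (fun v => F v = none) := by
      intro ρ hρ
      simp only [Finset.mem_filter, Finset.mem_univ, true_and] at hρ ⊢
      rw [hf]; simp only [hρ, dif_pos]
      exact (hcon ρ hρ).choose_spec.1
    have hinj : Set.InjOn f (Finset.univ.filter (fun v => G v = none) : Finset V) := by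
      intro ρ1 h1 ρ2 h2 heq
      simp only [Finset.coe_filter, Set.mem_setOf_eq, Finset.mem_univ, true_and] at h1 h2
      have e1 : f ρ1 = (hcon ρ1 h1).choose := by rw [hf]; simp [h1]
      have e2 : f ρ2 = (hcon ρ2 h2).choose := by rw [hf]; simp [h2]
      have s1 := (hcon ρ1 h1).choose_spec
      have s2 := (hcon ρ2 h2).choose_spec
      refine reaches_roots_eq h1 h2 s1.2 ?_
      rw [← e1, heq, e2]
      exact s2.2
    have hcard := Finset.card_le_card_of_injOn f hmap hinj
    have hG' : (Finset.univ.filter (fun v => G v = none)).card = q' + 1 := by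
      rw [← hGt, numTrees]
    have hF' : (Finset.univ.filter (fun v => F v = none)).card = p := by
      rw [← hFt, numTrees]
    omega
  obtain ⟨ρ, hρ, hno⟩ := pig
  obtain ⟨h1, h2, hcount, hcount2⟩ := tree_exchange (F := F) hFs.1 hGs.1 hρ
  have hzero : rootsIn (treeSet G ρ) F = 0 := by
    apply rootsIn_eq_zero
    intro v hv hvnone
    exact hno v hvnone hv
  have hall : rootsIn (treeSet G ρ)ᶜ F = p := by
    have := rootsIn_split (treeSet G ρ) F
    omega
  have hX2t : numTrees (exchange (treeSet G ρ)ᶜ F G) = q' := by omega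
  have hX1t : numTrees (exchange (treeSet G ρ) F G) = p + 1 := by omega
  have hX1s : IsSpanningForest A (exchange (treeSet G ρ) F G) :=
    ⟨h1, exchange_arcs hFs.2 hGs.2⟩
  have hX2s : IsSpanningForest A (exchange (treeSet G ρ)ᶜ F G) :=
    ⟨h2, exchange_arcs hFs.2 hGs.2⟩
  refine ⟨⟨_, hX1s, hX1t⟩, ⟨_, hX2s, hX2t⟩, ?_⟩
  have i1 : phi A w (p + 1) ≤ weight w (exchange (treeSet G ρ) F G) := phi_le hX1s hX1t
  have i2 : phi A w q' ≤ weight w (exchange (treeSet G ρ)ᶜ F G) := phi_le hX2s hX2t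
  have hsum := weight_exchange_add w (treeSet G ρ) F G
  rw [hFw, hGw] at hsum
  linarith

/-- Convexity chain. -/
theorem chain {k : ℕ} (A : V → V → Prop) (w : V → V → ℝ) (m p q : ℕ)
    (hq : q = p + 2 + 2 * m) (hpq : p + q = 2 * k)
    (hp : ∃ F, IsSpanningForest A F ∧ numTrees F = p)
    (hqe : ∃ F, IsSpanningForest A F ∧ numTrees F = q) :
    phi A w (k - 1) + phi A w (k + 1) ≤ phi A w p + phi A w q := by
  induction m generalizing p q with
  | zero =>
    have hp' : p = k - 1 := by omega
    have hq' : q = k + 1 := by omega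
    rw [hp', hq']
  | succ m ih =>
    have hq1 : q = (p + 3 + 2 * m) + 1 := by omega
    obtain ⟨e1, e2, hineq⟩ := wlem (k := k) A w (show p + 1 ≤ p + 3 + 2 * m by omega) hp
      (by rw [← hq1]; exact hqe)
    have := ih (p + 1) (p + 3 + 2 * m) (by omega) (by omega) e1 e2
    rw [hq1]
    linarith

/-- Each tree of an extreme forest `G` contains exactly one root of an extreme forest `F`. -/
theorem lemB {k : ℕ} (A : V → V → Prop) (w : V → V → ℝ) (hk : 2 ≤ k)
    (hlt : phi A w (k - 1) - phi A w k > phi A w k - phi A w (k + 1))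
    {F G : V → Option V} (hF : ExtremeForest A w k F) (hG : ExtremeForest A w k G)
    {ρ : V} (hρ : G ρ = none) :
    ∃ r, (F r = none ∧ Reaches G r ρ) ∧ ∀ r', F r' = none → Reaches G r' ρ → r' = r := by
  classical
  obtain ⟨hFs, hFt, hFw⟩ := extreme_iff.mp hF
  obtain ⟨hGs, hGt, hGw⟩ := extreme_iff.mp hG
  obtain ⟨h1, h2, hcount, hcount2⟩ := tree_exchange (F := F) hFs.1 hGs.1 hρ
  set a := rootsIn (treeSet G ρ) F with ha
  set p := numTrees (exchange (treeSet G ρ) F G) with hpdef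
  set q := numTrees (exchange (treeSet G ρ)ᶜ F G) with hqdef
  have hsplit := rootsIn_split (treeSet G ρ) F
  have hX1s : IsSpanningForest A (exchange (treeSet G ρ) F G) :=
    ⟨h1, exchange_arcs hFs.2 hGs.2⟩
  have hX2s : IsSpanningForest A (exchange (treeSet G ρ)ᶜ F G) :=
    ⟨h2, exchange_arcs hFs.2 hGs.2⟩
  have i1 : phi A w p ≤ weight w (exchange (treeSet G ρ) F G) := phi_le hX1s rfl
  have i2 : phi A w q ≤ weight w (exchange (treeSet G ρ)ᶜ F G) := phi_le hX2s rfl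
  have hsum := weight_exchange_add w (treeSet G ρ) F G
  rw [hFw, hGw] at hsum
  have hpq : p + q = 2 * k := by
    have := numTrees_exchange_add (treeSet G ρ) F G
    omega
  have hane : a = 1 := by
    by_contra hcon
    rcases Nat.lt_or_ge a 1 with h0 | h2'
    · -- a = 0
      have ha0 : a = 0 := by omega
      have hq' : q = k - 1 := by omega
      have hp' : p = k + 1 := by omega
      rw [hq'] at i2
      rw [hp'] at i1
      linarith
    · -- a ≥ 2
      have ha2 : 2 ≤ a := by omega
      have hqbig : k + 1 ≤ q := by omega
      obtain ⟨m, hm⟩ : ∃ m, q = p + 2 + 2 * m := ⟨a - 2, by omega⟩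
      have := chain (k := k) A w m p q hm hpq ⟨_, hX1s, rfl⟩ ⟨_, hX2s, rfl⟩
      linarith
  -- extract the unique root
  have hane' : rootsIn (treeSet G ρ) F = 1 := by rw [← ha]; exact hane
  obtain ⟨r, hrmem, huniq⟩ := exists_of_rootsIn_eq_one hane'
  exact ⟨r, ⟨hrmem.2, hrmem.1⟩, fun r' h1' h2' => huniq r' h2' h1'⟩

end ADRProof

namespace ADRProof

variable {V : Type*} [Fintype V] [DecidableEq V]

set_option linter.unusedSectionVars false

/-- Part 1: realization of the attraction domain as a tree of an extreme forest. -/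
theorem realize {k : ℕ} (A : V → V → Prop) (w : V → V → ℝ) (hk : 2 ≤ k)
    (hlt : phi A w (k - 1) - phi A w k > phi A w k - phi A w (k + 1))
    (i : V) (hi : IsMarked A w k i) :
    ∃ F, ExtremeForest A w k F ∧ F i = none ∧ treeSet F i = attrDomain A w k i := by
  classical
  obtain ⟨F0, hF0, hF0i⟩ := hi
  obtain ⟨Fs, hFsmem, hmax⟩ := Finset.exists_max_image
    (Finset.univ.filter (fun F : V → Option V => ExtremeForest A w k F ∧ F i = none))
    (fun F => (treeSet F i).ncard) ⟨F0, by simp [hF0, hF0i]⟩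
  simp only [Finset.mem_filter, Finset.mem_univ, true_and] at hFsmem
  obtain ⟨hFse, hFsi⟩ := hFsmem
  refine ⟨Fs, hFse, hFsi, ?_⟩
  apply Set.Subset.antisymm
  · intro y hy; exact ⟨Fs, hFse, hy⟩
  · rintro j ⟨G, hG, hji⟩
    set D := treeSet G i \ {i} with hD
    set X1 := exchange D Fs G with hX1
    have hGf : IsForest G := hG.1.1
    have hFsf : IsForest Fs := hFse.1.1
    obtain ⟨ρ, hiρ, hρ⟩ := exists_term hGf i
    obtain ⟨r0, hr0, huniq⟩ := lemB A w hk hlt hFse hG hρ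
    have hi0 : i = r0 := huniq i hFsi hiρ
    have hnoroot : ∀ r ∈ D, Fs r ≠ none := by
      rintro r ⟨hr1, hr2⟩ hrnone
      have hrr : r = r0 := huniq r hrnone (Relation.ReflTransGen.trans hr1 hiρ)
      exact hr2 (Set.mem_singleton_iff.mpr (hrr.trans hi0.symm))
    have hiD : i ∉ D := by simp [hD]
    have hreach : ∀ v, Reaches G v i → Reaches X1 v i := reach_root_exchange
    have hX1f : IsForest X1 := by
      apply noCycle (K := X1) D hFsf
      · intro v hv; exact exchange_not_mem hv
      · intro v hv
        refine ⟨i, hreach v hv.1, ?_⟩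
        show exchange D Fs G i = none
        rw [exchange_not_mem hiD]; exact hFsi
    have hX1s : IsSpanningForest A X1 := ⟨hX1f, exchange_arcs hFse.1.2 hG.1.2⟩
    have hc1 : rootsIn D G = 0 := by
      apply rootsIn_eq_zero
      rintro v ⟨hv1, hv2⟩ hvnone
      exact hv2 (Set.mem_singleton_iff.mpr (reaches_none_eq hv1 hvnone))
    have hc0 : rootsIn D Fs = 0 := rootsIn_eq_zero hnoroot
    have hsplitF := rootsIn_split D Fs
    have hFst : numTrees Fs = k := hFse.2.1
    have hGt : numTrees G = k := hG.2.1
    have hX1t : numTrees X1 = k := by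
      rw [hX1, numTrees_exchange]; omega
    have hpred : ∀ u x, G u = some x → x ∈ D → u ∈ D := by
      rintro u x harc ⟨hx1, hx2⟩
      refine ⟨Relation.ReflTransGen.head harc hx1, ?_⟩
      intro hu
      have hu' : u = i := hu
      exact hGf i (Relation.TransGen.head'
        (show Arc G i x by rw [← hu']; exact harc) hx1)
    have hX2f := compl_exchange_forest (D := D) (F := Fs) (G := G) hFsf hGf hpred
    have hX2s : IsSpanningForest A (exchange Dᶜ Fs G) := ⟨hX2f, exchange_arcs hFse.1.2 hG.1.2⟩
    have hX2t : numTrees (exchange Dᶜ Fs G) = k := by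
      have := numTrees_exchange_add D Fs G
      rw [← hX1] at this
      omega
    have i1 : phi A w k ≤ weight w X1 := phi_le hX1s hX1t
    have i2 : phi A w k ≤ weight w (exchange Dᶜ Fs G) := phi_le hX2s hX2t
    have hsum := weight_exchange_add w D Fs G
    rw [← hX1] at hsum
    have hFw : weight w Fs = phi A w k := (extreme_iff.mp hFse).2.2
    have hGw : weight w G = phi A w k := (extreme_iff.mp hG).2.2
    have hX1e : ExtremeForest A w k X1 := extreme_iff.mpr ⟨hX1s, hX1t, by linarith⟩
    have hX1i : X1 i = none := by
      rw [hX1]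
      show exchange D Fs G i = none
      rw [exchange_not_mem hiD]; exact hFsi
    have hsub : treeSet Fs i ⊆ treeSet X1 i := by
      intro y hy
      exact reach_lift (fun v hv => hreach v hv.1) y hy
    have hle : (treeSet X1 i).ncard ≤ (treeSet Fs i).ncard :=
      hmax X1 (by simp only [Finset.mem_filter, Finset.mem_univ, true_and]; exact ⟨hX1e, hX1i⟩)
    have heq : treeSet Fs i = treeSet X1 i :=
      Set.eq_of_subset_of_ncard_le hsub hle (Set.toFinite _)
    rw [heq]
    exact hreach j hji

/-- Part 2: inclusion of attraction domains. -/
theorem inc {k : ℕ} (A : V → V → Prop) (w : V → V → ℝ) (hk : 2 ≤ k)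
    (hlt : phi A w (k - 1) - phi A w k > phi A w k - phi A w (k + 1))
    {i j : V} (hj : IsMarked A w k j) (hij : i ∈ attrDomain A w k j) :
    attrDomain A w k i ⊆ attrDomain A w k j := by
  classical
  obtain ⟨Fj, hFje, hFjj, hFjt⟩ := realize A w hk hlt j hj
  have hiW : Reaches Fj i j := by
    have : i ∈ treeSet Fj j := by rw [hFjt]; exact hij
    exact this
  rintro x ⟨H, hH, hxi⟩
  obtain ⟨r0, hr0, huniq⟩ := lemB A w hk hlt hH hFje hFjj
  have hone : rootsIn (treeSet Fj j) H = 1 :=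
    rootsIn_eq_one ⟨hr0.2, hr0.1⟩ (fun v h1 h2 => huniq v h2 h1)
  obtain ⟨h1, h2, hcount, hcount2⟩ := tree_exchange (F := H) hH.1.1 hFje.1.1 hFjj
  have hHt : numTrees H = k := hH.2.1
  have hFjt' : numTrees Fj = k := hFje.2.1
  have hX2t : numTrees (exchange (treeSet Fj j)ᶜ H Fj) = k := by omega
  have hX1t : numTrees (exchange (treeSet Fj j) H Fj) = k := by
    have := numTrees_exchange_add (treeSet Fj j) H Fj
    omega
  have hX1s : IsSpanningForest A (exchange (treeSet Fj j) H Fj) := ⟨h1, exchange_arcs hH.1.2 hFje.1.2⟩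
  have hX2s : IsSpanningForest A (exchange (treeSet Fj j)ᶜ H Fj) := ⟨h2, exchange_arcs hH.1.2 hFje.1.2⟩
  have i1 : phi A w k ≤ weight w (exchange (treeSet Fj j) H Fj) := phi_le hX1s hX1t
  have i2 : phi A w k ≤ weight w (exchange (treeSet Fj j)ᶜ H Fj) := phi_le hX2s hX2t
  have hsum := weight_exchange_add w (treeSet Fj j) H Fj
  have hHw : weight w H = phi A w k := (extreme_iff.mp hH).2.2
  have hFw : weight w Fj = phi A w k := (extreme_iff.mp hFje).2.2
  have hX1e : ExtremeForest A w k (exchange (treeSet Fj j) H Fj) :=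
    extreme_iff.mpr ⟨hX1s, hX1t, by linarith⟩
  refine ⟨exchange (treeSet Fj j) H Fj, hX1e, ?_⟩
  exact reach_lift' (fun v hv => reach_tree_exchange v hv) hiW x hxi

end ADRProof

/-- Under the strict convexity inequality, for every marked vertex `i` there is a
minimal-weight spanning `k`-forest in which `i` is a root and the vertex set of its tree is
the `k`-attraction domain of `i`; mutually `k`-attainable marked vertices have equal
`k`-attraction domains. -/
theorem attraction_domain_realized {V : Type*} [Fintype V] [DecidableEq V]
    (A : V → V → Prop) (w : V → V → ℝ) (k : ℕ)
    (hk : 2 ≤ k) (hk' : k + 1 ≤ Fintype.card V)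
    (hEx : ∃ F, IsSpanningForest A F ∧ numTrees F = k - 1)
    (hlt : phi A w (k - 1) - phi A w k > phi A w k - phi A w (k + 1))
    (i : V) (hi : IsMarked A w k i) :
    (∃ F, ExtremeForest A w k F ∧ F i = none ∧ treeSet F i = attrDomain A w k i) ∧
      ∀ j, IsMarked A w k j →
        (∃ F, ExtremeForest A w k F ∧ Reaches F i j) →
        (∃ G, ExtremeForest A w k G ∧ Reaches G j i) →
        attrDomain A w k i = attrDomain A w k j := by
  constructor
  · exact ADRProof.realize A w hk hlt i hi
  · intro j hj hFij hGji
    have hij : i ∈ attrDomain A w k j := hFij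
    have hji : j ∈ attrDomain A w k i := hGji
    exact Set.Subset.antisymm (ADRProof.inc A w hk hlt hj hij)
      (ADRProof.inc A w hk hlt hi hji)
end

section
/- Let V be a weighted digraph with φ_{k-1} - φ_k > φ_k - φ_{k+1}, let F be a minimal-weight spanning k-forest, and let E be an atom of the algebra A_k. Then there exists a minimal-weight spanning k-forest G in which the outgoing arcs of all vertices of E coincide with those in F, and no arc of G has its terminus in E and origin outside E. -/
open Relation

section AuxBasic

variable {V : Type*} [Fintype V] [DecidableEq V]

lemma reaches_root {F : V → Option V} {r x : V} (hr : F r = none)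
    (h : Reaches F r x) : x = r := by
  rcases h.cases_head with h | ⟨c, hc, _⟩
  · exact h.symm
  · exact absurd hc (by simp [Arc, hr])

lemma root_unique {F : V → Option V} {r r' : V} (hr : F r = none) (hr' : F r' = none) :
    ∀ {i : V}, Reaches F i r → Reaches F i r' → r = r' := by
  intro i h1
  induction h1 using Relation.ReflTransGen.head_induction_on with
  | refl => intro h2; exact (reaches_root hr h2).symm
  | head harc hrest ih =>
    intro h2
    rcases h2.cases_head with h | ⟨c', hc', hrest'⟩
    · subst h; exact absurd harc (by simp [Arc, hr'])
    · have hcc : _ = c' := Option.some.inj ((harc : _ = _).symm.trans hc')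
      exact ih (hcc ▸ hrest')

lemma exists_root {F : V → Option V} (hF : IsForest F) (i : V) :
    ∃ r, Reaches F i r ∧ F r = none := by
  have main : ∀ (n : ℕ) (i : V), {j | Reaches F i j}.ncard ≤ n →
      ∃ r, Reaches F i r ∧ F r = none := by
    intro n
    induction n with
    | zero =>
      intro i hle
      exfalso
      have h0 : {j | Reaches F i j}.ncard = 0 := Nat.le_zero.mp hle
      rw [Set.ncard_eq_zero (Set.toFinite _)] at h0
      have : i ∈ {j | Reaches F i j} := Relation.ReflTransGen.refl
      rw [h0] at this
      exact this
    | succ n ih =>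
      intro i hle
      cases hFi : F i with
      | none => exact ⟨i, Relation.ReflTransGen.refl, hFi⟩
      | some j =>
        have harc : Arc F i j := hFi
        have hsub : {x | Reaches F j x} ⊆ {x | Reaches F i x} :=
          fun x hx => Relation.ReflTransGen.head harc hx
        have hni : i ∉ {x | Reaches F j x} := by
          intro hmem
          exact hF i (Relation.TransGen.head' harc hmem)
        have hss : {x | Reaches F j x} ⊂ {x | Reaches F i x} :=
          (Set.ssubset_iff_of_subset hsub).mpr ⟨i, Relation.ReflTransGen.refl, hni⟩
        have hlt := Set.ncard_lt_ncard hss (Set.toFinite _)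
        obtain ⟨r, hr1, hr2⟩ := ih j (by omega)
        exact ⟨r, Relation.ReflTransGen.head harc hr1, hr2⟩
  exact main _ i le_rfl

lemma mem_treeSet_self {K : V → Option V} (r : V) : r ∈ treeSet K r :=
  Relation.ReflTransGen.refl

lemma arc_mem_treeSet {K : V → Option V} {r i j : V} (hr : K r = none)
    (harc : Arc K i j) : i ∈ treeSet K r ↔ j ∈ treeSet K r := by
  constructor
  · intro hi
    rcases (hi : Reaches K i r).cases_head with h | ⟨c, hc, hrest⟩
    · subst h; exact absurd harc (by simp [Arc, hr])
    · have hcc : c = j := Option.some.inj ((hc : _ = _).symm.trans harc)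
      exact hcc ▸ hrest
  · intro hj; exact Relation.ReflTransGen.head harc hj

end AuxBasic

set_option linter.unusedSectionVars false

section AuxExchange

variable {V : Type*} [Fintype V] [DecidableEq V]

lemma exchange_mem {D : Set V} {F G : V → Option V} {i : V} (hi : i ∈ D) :
    exchange D F G i = G i := by simp [exchange, hi]

lemma exchange_not_mem {D : Set V} {F G : V → Option V} {i : V} (hi : i ∉ D) :
    exchange D F G i = F i := by simp [exchange, hi]

lemma exchange_flip (D : Set V) (F G : V → Option V) :
    exchange D F G = exchange Dᶜ G F := by
  funext i
  by_cases hi : i ∈ D <;> simp [exchange, hi]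

lemma exchange_stay {D : Set V} {F G : V → Option V}
    (hD : ∀ i ∈ D, ∀ j, G i = some j → j ∈ D) {x y : V}
    (h : Relation.TransGen (Arc (exchange D F G)) x y) (hx : x ∈ D) :
    Relation.TransGen (Arc G) x y ∧ y ∈ D := by
  induction h with
  | single h' =>
    rw [Arc, exchange_mem hx] at h'
    exact ⟨Relation.TransGen.single h', hD _ hx _ h'⟩
  | tail h1 h2 ih =>
    obtain ⟨t1, hyD⟩ := ih
    rw [Arc, exchange_mem hyD] at h2
    exact ⟨t1.tail h2, hD _ hyD _ h2⟩

lemma exchange_escape {D : Set V} {F G : V → Option V}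
    (hD : ∀ i ∈ D, ∀ j, G i = some j → j ∈ D) {x y : V}
    (h : Relation.TransGen (Arc (exchange D F G)) x y) (hx : x ∉ D) :
    Relation.TransGen (Arc F) x y ∨ y ∈ D := by
  induction h with
  | single h' =>
    rw [Arc, exchange_not_mem hx] at h'
    exact Or.inl (Relation.TransGen.single h')
  | @tail b c h1 h2 ih =>
    rcases ih with hF1 | hyD
    · by_cases hy : b ∈ D
      · rw [Arc, exchange_mem hy] at h2
        exact Or.inr (hD _ hy _ h2)
      · rw [Arc, exchange_not_mem hy] at h2
        exact Or.inl (hF1.tail h2)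
    · rw [Arc, exchange_mem hyD] at h2
      exact Or.inr (hD _ hyD _ h2)

lemma isForest_exchange {D : Set V} {F G : V → Option V}
    (hF : IsForest F) (hG : IsForest G)
    (hD : ∀ i ∈ D, ∀ j, G i = some j → j ∈ D) : IsForest (exchange D F G) := by
  intro i hcyc
  by_cases hi : i ∈ D
  · exact hG i (exchange_stay hD hcyc hi).1
  · rcases exchange_escape hD hcyc hi with h | h
    · exact hF i h
    · exact hi h

lemma isSpanningForest_exchange {A : V → V → Prop} {D : Set V} {F G : V → Option V}
    (hF : IsSpanningForest A F) (hG : IsSpanningForest A G)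
    (hD : ∀ i ∈ D, ∀ j, G i = some j → j ∈ D) :
    IsSpanningForest A (exchange D F G) := by
  refine ⟨isForest_exchange hF.1 hG.1 hD, fun i j h => ?_⟩
  by_cases hi : i ∈ D
  · rw [exchange_mem hi] at h; exact hG.2 i j h
  · rw [exchange_not_mem hi] at h; exact hF.2 i j h

lemma numTrees_eq_ncard (P : V → Option V) : numTrees P = {i | P i = none}.ncard := by
  rw [numTrees, ← Set.ncard_coe_finset]
  congr 1
  ext i
  simp

lemma roots_exchange (D : Set V) (F G : V → Option V) :
    {i | exchange D F G i = none} =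
      {i | i ∈ D ∧ G i = none} ∪ {i | i ∉ D ∧ F i = none} := by
  ext i
  by_cases hi : i ∈ D <;> simp [exchange, hi]

lemma weight_exchange_add (w : V → V → ℝ) (D : Set V) (F G : V → Option V) :
    weight w (exchange D F G) + weight w (exchange D G F) = weight w F + weight w G := by
  unfold weight
  rw [← Finset.sum_add_distrib, ← Finset.sum_add_distrib]
  apply Finset.sum_congr rfl
  intro i _
  by_cases hi : i ∈ D
  · rw [exchange_mem hi, exchange_mem hi]; exact add_comm _ _
  · rw [exchange_not_mem hi, exchange_not_mem hi]

lemma phi_le {A : V → V → Prop} {w : V → V → ℝ} {j : ℕ} {G : V → Option V}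
    (hG : IsSpanningForest A G) (hn : numTrees G = j) : phi A w j ≤ weight w G := by
  rw [phi]
  apply csInf_le
  · exact Set.Finite.bddBelow ((Set.toFinite _).image _)
  · exact Set.mem_image_of_mem _ ⟨hG, hn⟩

lemma extreme_weight {A : V → V → Prop} {w : V → V → ℝ} {k : ℕ} {F : V → Option V}
    (hF : ExtremeForest A w k F) : weight w F = phi A w k := by
  have h : IsLeast (weight w '' {G | IsSpanningForest A G ∧ numTrees G = k}) (weight w F) := by
    constructor
    · exact Set.mem_image_of_mem _ ⟨hF.1, hF.2.1⟩
    · rintro x ⟨G, ⟨hG, hGn⟩, rfl⟩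
      exact hF.2.2 G hG hGn
  rw [phi]
  exact h.csInf_eq.symm

end AuxExchange

section AuxCount

variable {V : Type*} [Fintype V] [DecidableEq V]
variable {A : V → V → Prop} {w : V → V → ℝ} {k : ℕ}

lemma roots_in_tree_singleton {K : V → Option V} {r : V} (hr : K r = none) :
    {i | i ∈ treeSet K r ∧ K i = none} = {r} := by
  ext i
  simp only [Set.mem_setOf_eq, Set.mem_singleton_iff]
  constructor
  · rintro ⟨hreach, hroot⟩
    exact (reaches_root hroot hreach).symm
  · rintro rfl
    exact ⟨mem_treeSet_self _, hr⟩

lemma roots_off_tree {K : V → Option V} {r : V} (hr : K r = none) :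
    {i | i ∉ treeSet K r ∧ K i = none} = {i | K i = none} \ {r} := by
  ext i
  simp only [Set.mem_setOf_eq, Set.mem_diff, Set.mem_singleton_iff]
  constructor
  · rintro ⟨hns, hroot⟩
    exact ⟨hroot, fun h => hns (by rw [h]; exact mem_treeSet_self _)⟩
  · rintro ⟨hroot, hne⟩
    exact ⟨fun hs => hne (reaches_root hroot hs).symm, hroot⟩

lemma one_le_roots_in_tree
    (hlt : phi A w (k - 1) - phi A w k > phi A w k - phi A w (k + 1))
    {H K : V → Option V} (hH : ExtremeForest A w k H) (hK : ExtremeForest A w k K)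
    {r : V} (hr : K r = none) :
    {i | H i = none ∧ i ∈ treeSet K r}.ncard ≠ 0 := by
  intro hzero
  rw [Set.ncard_eq_zero (Set.toFinite _)] at hzero
  set S := treeSet K r with hS
  have hclosS : ∀ i ∈ S, ∀ j, K i = some j → j ∈ S := fun i hi j hij =>
    (arc_mem_treeSet hr hij).mp hi
  have hclosSc : ∀ i ∈ Sᶜ, ∀ j, K i = some j → j ∈ Sᶜ := fun i hi j hij hj =>
    hi ((arc_mem_treeSet hr hij).mpr hj)
  set P := exchange S H K with hP
  set Q := exchange S K H with hQ
  have hQ' : Q = exchange Sᶜ H K := by rw [hQ, exchange_flip]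
  have hPf : IsSpanningForest A P := isSpanningForest_exchange hH.1 hK.1 hclosS
  have hQf : IsSpanningForest A Q := by
    rw [hQ']; exact isSpanningForest_exchange hH.1 hK.1 hclosSc
  have hHroots : {i | i ∉ S ∧ H i = none} = {i | H i = none} := by
    ext i
    simp only [Set.mem_setOf_eq]
    constructor
    · exact fun h => h.2
    · intro h
      refine ⟨fun hs => ?_, h⟩
      have : i ∈ {i | H i = none ∧ i ∈ S} := ⟨h, hs⟩
      rw [hzero] at this
      exact this
  have hzero' : {i | i ∈ S ∧ H i = none} = (∅ : Set V) := by
    rw [← hzero]; ext i; exact ⟨fun h => ⟨h.2, h.1⟩, fun h => ⟨h.2, h.1⟩⟩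
  have hnP : numTrees P = k + 1 := by
    have hdisj : Disjoint {i | i ∈ S ∧ K i = none} {i | i ∉ S ∧ H i = none} := by
      rw [Set.disjoint_left]
      rintro a ⟨ha1, _⟩ ⟨ha2, _⟩
      exact ha2 ha1
    rw [hP, numTrees_eq_ncard, roots_exchange,
      Set.ncard_union_eq hdisj (Set.toFinite _) (Set.toFinite _),
      roots_in_tree_singleton hr, hHroots, Set.ncard_singleton,
      ← numTrees_eq_ncard, hH.2.1]
    omega
  have hnQ : numTrees Q = k - 1 := by
    rw [hQ, numTrees_eq_ncard, roots_exchange, hzero', Set.empty_union, roots_off_tree hr,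
      Set.ncard_diff (by simp [hr]) (Set.toFinite _), Set.ncard_singleton,
      ← numTrees_eq_ncard, hK.2.1]
  have hwsum := weight_exchange_add w S H K
  have h1 : phi A w (k + 1) ≤ weight w P := phi_le hPf hnP
  have h2 : phi A w (k - 1) ≤ weight w Q := phi_le hQf hnQ
  have h3 : weight w H = phi A w k := extreme_weight hH
  have h4 : weight w K = phi A w k := extreme_weight hK
  rw [← hP, ← hQ] at hwsum
  linarith

lemma roots_in_tree_eq_one
    (hlt : phi A w (k - 1) - phi A w k > phi A w k - phi A w (k + 1))
    {H K : V → Option V} (hH : ExtremeForest A w k H) (hK : ExtremeForest A w k K)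
    {r : V} (hr : K r = none) :
    {i | H i = none ∧ i ∈ treeSet K r}.ncard = 1 := by
  classical
  choose f hf1 hf2 using exists_root hK.1.1
  let g : {i // H i = none} → {x // K x = none} := fun i => ⟨f i.1, hf2 i.1⟩
  have hcard1 : Fintype.card {i // H i = none} = k := by
    rw [Fintype.card_subtype]; exact hH.2.1
  have hcard2 : Fintype.card {x // K x = none} = k := by
    rw [Fintype.card_subtype]; exact hK.2.1
  have hsurj : Function.Surjective g := by
    rintro ⟨r', hr'⟩
    obtain ⟨a, ha1, ha2⟩ := Set.nonempty_of_ncard_ne_zero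
      (one_le_roots_in_tree hlt hH hK hr')
    refine ⟨⟨a, ha1⟩, Subtype.ext ?_⟩
    exact root_unique (hf2 a) hr' (hf1 a) ha2
  have hbij : Function.Bijective g :=
    (Fintype.bijective_iff_surjective_and_card g).mpr ⟨hsurj, by rw [hcard1, hcard2]⟩
  obtain ⟨a, ha1, ha2⟩ := Set.nonempty_of_ncard_ne_zero
    (one_le_roots_in_tree hlt hH hK hr)
  rw [Set.ncard_eq_one]
  refine ⟨a, ?_⟩
  ext y
  simp only [Set.mem_setOf_eq, Set.mem_singleton_iff]
  constructor
  · rintro ⟨hy1, hy2⟩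
    have hga : g ⟨a, ha1⟩ = ⟨r, hr⟩ := Subtype.ext (root_unique (hf2 a) hr (hf1 a) ha2)
    have hgy : g ⟨y, hy1⟩ = ⟨r, hr⟩ := Subtype.ext (root_unique (hf2 y) hr (hf1 y) hy2)
    have := hbij.1 (hgy.trans hga.symm)
    exact congrArg Subtype.val this
  · rintro rfl
    exact ⟨ha1, ha2⟩

lemma exchange_extreme
    (hlt : phi A w (k - 1) - phi A w k > phi A w k - phi A w (k + 1)) (hk : 2 ≤ k)
    {H K : V → Option V} (hH : ExtremeForest A w k H) (hK : ExtremeForest A w k K)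
    {r : V} (hr : K r = none) :
    ExtremeForest A w k (exchange (treeSet K r)ᶜ H K) := by
  set S := treeSet K r with hS
  have hclosS : ∀ i ∈ S, ∀ j, K i = some j → j ∈ S := fun i hi j hij =>
    (arc_mem_treeSet hr hij).mp hi
  have hclosSc : ∀ i ∈ Sᶜ, ∀ j, K i = some j → j ∈ Sᶜ := fun i hi j hij hj =>
    hi ((arc_mem_treeSet hr hij).mpr hj)
  set P := exchange Sᶜ H K with hP
  set Q := exchange Sᶜ K H with hQ
  have hQ' : Q = exchange S H K := by rw [hQ, exchange_flip, compl_compl]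
  have hPf : IsSpanningForest A P := isSpanningForest_exchange hH.1 hK.1 hclosSc
  have hQf : IsSpanningForest A Q := by
    rw [hQ']; exact isSpanningForest_exchange hH.1 hK.1 hclosS
  have hone := roots_in_tree_eq_one hlt hH hK hr
  have hE1 : {i | i ∈ Sᶜ ∧ K i = none} = {i | K i = none} \ {r} := by
    rw [← roots_off_tree hr]; rfl
  have hE2 : {i | i ∉ Sᶜ ∧ H i = none} = {i | H i = none ∧ i ∈ S} := by
    ext i
    simp only [Set.mem_setOf_eq, Set.mem_compl_iff, not_not]
    exact ⟨fun h => ⟨h.2, h.1⟩, fun h => ⟨h.2, h.1⟩⟩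
  have hE3 : {i | i ∈ Sᶜ ∧ H i = none} =
      {i | H i = none} \ {i | H i = none ∧ i ∈ S} := by
    ext i
    simp only [Set.mem_setOf_eq, Set.mem_compl_iff, Set.mem_diff]
    constructor
    · rintro ⟨hns, hroot⟩
      exact ⟨hroot, fun h => hns h.2⟩
    · rintro ⟨hroot, hn⟩
      exact ⟨fun hs => hn ⟨hroot, hs⟩, hroot⟩
  have hE4 : {i | i ∉ Sᶜ ∧ K i = none} = {r} := by
    rw [← roots_in_tree_singleton hr]
    ext i
    simp only [Set.mem_setOf_eq, Set.mem_compl_iff, not_not]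
    exact Iff.rfl
  have hnP : numTrees P = k := by
    have hdisj : Disjoint {i | i ∈ Sᶜ ∧ K i = none} {i | i ∉ Sᶜ ∧ H i = none} := by
      rw [Set.disjoint_left]
      rintro a ⟨ha1, _⟩ ⟨ha2, _⟩
      exact ha2 ha1
    rw [hP, numTrees_eq_ncard, roots_exchange,
      Set.ncard_union_eq hdisj (Set.toFinite _) (Set.toFinite _), hE1, hE2,
      Set.ncard_diff (by simp [hr]) (Set.toFinite _), Set.ncard_singleton,
      ← numTrees_eq_ncard, hK.2.1, hone]
    omega
  have hnQ : numTrees Q = k := by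
    have hdisj : Disjoint {i | i ∈ Sᶜ ∧ H i = none} {i | i ∉ Sᶜ ∧ K i = none} := by
      rw [Set.disjoint_left]
      rintro a ⟨ha1, _⟩ ⟨ha2, _⟩
      exact ha2 ha1
    rw [hQ, numTrees_eq_ncard, roots_exchange,
      Set.ncard_union_eq hdisj (Set.toFinite _) (Set.toFinite _), hE3, hE4,
      Set.ncard_diff (fun i hi => hi.1) (Set.toFinite _), Set.ncard_singleton,
      ← numTrees_eq_ncard, hH.2.1, hone]
    omega
  have hwsum := weight_exchange_add w Sᶜ H K
  rw [← hP, ← hQ] at hwsum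
  have h2 : phi A w k ≤ weight w Q := phi_le hQf hnQ
  have h3 : weight w H = phi A w k := extreme_weight hH
  have h4 : weight w K = phi A w k := extreme_weight hK
  refine ⟨hPf, hnP, fun G hG hGn => ?_⟩
  have h5 : phi A w k ≤ weight w G := phi_le hG hGn
  linarith

end AuxCount

section AuxAtom

variable {V : Type*} [Fintype V] [DecidableEq V]
variable {A : V → V → Prop} {w : V → V → ℝ} {k : ℕ}

lemma gen_dichotomy {E : Set V} (hE : IsElementary (alg A w k) E)
    {S : Set V} (hS : S ∈ genSets A w k) : E ⊆ S ∨ E ∩ S = ∅ := by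
  have hSm : @MeasurableSet V (alg A w k) S :=
    MeasurableSpace.measurableSet_generateFrom hS
  rcases hE.2.2 (E ∩ S) (hE.1.inter hSm) Set.inter_subset_left with h | h
  · exact Or.inr h
  · exact Or.inl (by rw [← h]; exact Set.inter_subset_right)

lemma tree_containing {E : Set V} (hE : IsElementary (alg A w k) E)
    {x₀ : V} (hx₀ : x₀ ∈ E) {K : V → Option V} (hK : ExtremeForest A w k K) :
    ∃ r, K r = none ∧ E ⊆ treeSet K r ∧ treeSet K r ∈ genSets A w k := by
  obtain ⟨r, hr1, hr2⟩ := exists_root hK.1.1 x₀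
  have hgen : treeSet K r ∈ genSets A w k := ⟨K, r, hK, hr2, rfl⟩
  rcases gen_dichotomy hE hgen with h | h
  · exact ⟨r, hr2, h, hgen⟩
  · exfalso
    rw [Set.eq_empty_iff_forall_notMem] at h
    exact h x₀ ⟨hx₀, hr1⟩

lemma atom_escape {E : Set V} (hE : IsElementary (alg A w k) E)
    {x₀ : V} (hx₀ : x₀ ∈ E) {i : V} (hi : i ∉ E) :
    ∃ K r, ExtremeForest A w k K ∧ K r = none ∧ E ⊆ treeSet K r ∧ i ∉ treeSet K r := by
  classical
  set EE : Set V := {y | ∀ S ∈ genSets A w k, E ⊆ S → y ∈ S} with hEE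
  have hind : ∀ M : Set V, @MeasurableSet V (alg A w k) M → (EE ⊆ M ∨ EE ∩ M = ∅) := by
    intro M hM
    refine MeasurableSpace.generateFrom_induction (genSets A w k)
      (fun M _ => EE ⊆ M ∨ EE ∩ M = ∅) ?_ ?_ ?_ ?_ M hM
    · intro t ht _
      rcases gen_dichotomy hE ht with hsub | hdisj
      · exact Or.inl (fun y hy => hy t ht hsub)
      · right
        obtain ⟨K, r', hK, hr', rfl⟩ := ht
        obtain ⟨r, hr, hEr, hgen⟩ := tree_containing hE hx₀ hK
        rw [Set.eq_empty_iff_forall_notMem]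
        rintro y ⟨hy1, hy2⟩
        have hyr : y ∈ treeSet K r := hy1 _ hgen hEr
        have hrr : r = r' := root_unique hr hr' hyr hy2
        rw [Set.eq_empty_iff_forall_notMem] at hdisj
        exact hdisj x₀ ⟨hx₀, hrr ▸ hEr hx₀⟩
    · right
      simp
    · intro t _ hp
      rcases hp with h | h
      · right
        rw [Set.eq_empty_iff_forall_notMem]
        rintro y ⟨hy1, hy2⟩
        exact hy2 (h hy1)
      · left
        intro y hy
        simp only [Set.mem_compl_iff]
        intro hyt
        rw [Set.eq_empty_iff_forall_notMem] at h
        exact h y ⟨hy, hyt⟩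
    · intro f _ hp
      by_cases hex : ∃ n, EE ⊆ f n
      · obtain ⟨n, hn⟩ := hex
        exact Or.inl (hn.trans (Set.subset_iUnion f n))
      · push_neg at hex
        right
        rw [Set.eq_empty_iff_forall_notMem]
        rintro y ⟨hy1, hy2⟩
        simp only [Set.mem_iUnion] at hy2
        obtain ⟨n, hn⟩ := hy2
        rcases hp n with h | h
        · exact hex n h
        · rw [Set.eq_empty_iff_forall_notMem] at h
          exact h y ⟨hy1, hn⟩
  have hxEE : x₀ ∈ EE := by
    simp only [hEE, Set.mem_setOf_eq]
    exact fun S hS hsub => hsub hx₀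
  rcases hind E hE.1 with hsub | hdisj
  · have hiEE : i ∉ EE := fun h => hi (hsub h)
    rw [hEE, Set.mem_setOf_eq] at hiEE
    push_neg at hiEE
    obtain ⟨S, hSgen, hES, hiS⟩ := hiEE
    obtain ⟨K, r, hK, hr, rfl⟩ := hSgen
    exact ⟨K, r, hK, hr, hES, hiS⟩
  · exfalso
    rw [Set.eq_empty_iff_forall_notMem] at hdisj
    exact hdisj x₀ ⟨hxEE, hx₀⟩

end AuxAtom

/-- Under the strict convexity inequality, for every minimal-weight spanning `k`-forest `F`
and every elementary set `E` of `A_k` there is a minimal-weight spanning `k`-forest `G`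
whose outgoing arcs from vertices of `E` coincide with those of `F`, and into whose `E` no
arc comes from outside. -/
theorem elementary_no_incoming {V : Type*} [Fintype V] [DecidableEq V]
    (A : V → V → Prop) (w : V → V → ℝ) (k : ℕ)
    (hk : 2 ≤ k) (hk' : k + 1 ≤ Fintype.card V)
    (hEx : ∃ F, IsSpanningForest A F ∧ numTrees F = k - 1)
    (hlt : phi A w (k - 1) - phi A w k > phi A w k - phi A w (k + 1))
    (F : V → Option V) (hF : ExtremeForest A w k F)
    (E : Set V) (hE : IsElementary (alg A w k) E) :
    ∃ G, ExtremeForest A w k G ∧ (∀ i ∈ E, G i = F i) ∧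
      ∀ i j, Arc G i j → j ∈ E → i ∈ E := by
  classical
  obtain ⟨x₀, hx₀⟩ := hE.2.1
  have key : ∀ (n : ℕ) (H : V → Option V), ExtremeForest A w k H →
      (∀ e ∈ E, H e = F e) →
      {i | i ∉ E ∧ ∃ j ∈ E, H i = some j}.ncard ≤ n →
      ∃ G, ExtremeForest A w k G ∧ (∀ i ∈ E, G i = F i) ∧
        ∀ i j, Arc G i j → j ∈ E → i ∈ E := by
    intro n
    induction n with
    | zero =>
      intro H h1 h2 h3
      refine ⟨H, h1, h2, fun i j harc hj => ?_⟩
      by_contra hi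
      have hmem : i ∈ {i | i ∉ E ∧ ∃ j ∈ E, H i = some j} := ⟨hi, j, hj, harc⟩
      have h0 := Nat.le_zero.mp h3
      rw [Set.ncard_eq_zero (Set.toFinite _)] at h0
      rw [h0] at hmem
      exact hmem
    | succ n ih =>
      intro H h1 h2 h3
      by_cases hne : {i | i ∉ E ∧ ∃ j ∈ E, H i = some j}.Nonempty
      · obtain ⟨i₀, hi₀E, j₀, hj₀, harc₀⟩ := hne
        obtain ⟨K, r, hK, hr, hEsub, hi₀S⟩ := atom_escape hE hx₀ hi₀E
        set S := treeSet K r with hS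
        set H' := exchange Sᶜ H K with hH'
        have hH'ext : ExtremeForest A w k H' := exchange_extreme hlt hk h1 hK hr
        have hagree : ∀ e ∈ E, H' e = F e := by
          intro e he
          have heS : e ∉ Sᶜ := by
            simp only [Set.mem_compl_iff, not_not]
            exact hEsub he
          rw [hH', exchange_not_mem heS, h2 e he]
        have hsub2 : {i | i ∉ E ∧ ∃ j ∈ E, H' i = some j} ⊆
            {i | i ∉ E ∧ ∃ j ∈ E, H i = some j} ∩ S := by
          rintro x ⟨hxE, j, hjE, hxj⟩
          by_cases hxS : x ∈ S
          · have hxc : x ∉ Sᶜ := by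
              simp only [Set.mem_compl_iff, not_not]
              exact hxS
            rw [hH', exchange_not_mem hxc] at hxj
            exact ⟨⟨hxE, j, hjE, hxj⟩, hxS⟩
          · exfalso
            have hxc : x ∈ Sᶜ := hxS
            rw [hH', exchange_mem hxc] at hxj
            exact hxS ((arc_mem_treeSet hr hxj).mpr (hEsub hjE))
        have hss : {i | i ∉ E ∧ ∃ j ∈ E, H' i = some j} ⊂
            {i | i ∉ E ∧ ∃ j ∈ E, H i = some j} :=
          (Set.ssubset_iff_of_subset (hsub2.trans Set.inter_subset_left)).mpr
            ⟨i₀, ⟨hi₀E, j₀, hj₀, harc₀⟩, fun hmem => hi₀S (hsub2 hmem).2⟩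
        have hcard := Set.ncard_lt_ncard hss (Set.toFinite _)
        exact ih H' hH'ext hagree (by omega)
      · refine ⟨H, h1, h2, fun i j harc hj => ?_⟩
        by_contra hi
        exact hne ⟨i, hi, j, hj, harc⟩
  exact key _ F hF (fun _ _ => rfl) le_rfl
end
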